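/- (Proposition 4, second-moment form.) Let H be a real inner product space, let ℓ ≥ 2 and 2 ≤ m ≤ ℓ be integers, ρ ∈ (−1/(ℓ−1), 1), and γ > 0. Let I be the collection of all m-element subsets of {1,…,ℓ}. Suppose x₁,…,x_ℓ ∈ H satisfy ⟨x_i, x_i⟩ = 1 and ⟨x_i, x_j⟩ = ρ for i ≠ j, and vectors n_{S,k} ∈ H (S ∈ I, 1 ≤ k ≤ m) satisfy ⟨n_{S,k}, n_{S,k}⟩ = m−1, ⟨n_{S,k}, n_{S,k'}⟩ = −1 for k ≠ k', ⟨n_{S,k}, n_{S',k'}⟩ = 0 whenever S ≠ S', and ⟨n_{S,k}, x_i⟩ = 0 for all i, S, k. For S ∈ I with increasing enumeration i₁ < ⋯ < i_m, define u_{S,k} = m·x_{i_k} − Σ_{j=1}^{m} x_{i_j} + √γ·n_{S,k}. Let κ = (1−ρ)/(γ + C(ℓ−2,m−2)·ℓ·(1−ρ)) and x̂_i = κ·Σ_{S ∈ I : i ∈ S} u_{S, τ_S(i)}, where τ_S(i) is the position of i in the increasing enumeration of S. Then: (a) ⟨x_i − x̂_i, u_{S',k'}⟩ = 0 for every i ∈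 {1,…,ℓ}, S' ∈ I, and 1 ≤ k' ≤ m; and (b) ⟨x_i − x̂_i, x_j − x̂_j⟩ equals d⁻(γ) if i = j and equals θ⁻(γ) if i ≠ j. -/

import Mathlib

open scoped RealInnerProductSpace


open Finset in
lemma count_superset {α : Type*} [DecidableEq α] (s t : Finset α) (hts : t ⊆ s) (k : ℕ) :
    ((s.powersetCard (k + t.card)).filter (fun r => t ⊆ r)).card
      = (s.card - t.card).choose k := by
  rw [← Finset.card_sdiff_of_subset hts, ← Finset.card_powersetCard k (s \ t)]
  apply Finset.card_nbij' (fun r => r \ t) (fun q => q ∪ t)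
  · intro r hr
    simp only [Finset.mem_coe, Finset.mem_filter, Finset.mem_powersetCard] at hr ⊢
    exact ⟨Finset.sdiff_subset_sdiff hr.1.1 le_rfl,
      by rw [Finset.card_sdiff_of_subset hr.2, hr.1.2, Nat.add_sub_cancel]⟩
  · intro q hq
    simp only [Finset.mem_coe, Finset.mem_powersetCard, Finset.mem_filter] at hq ⊢
    constructor
    · refine ⟨Finset.union_subset (hq.1.trans Finset.sdiff_subset) hts, ?_⟩
      rw [Finset.card_union_of_disjoint, hq.2]
      exact Disjoint.mono_left hq.1 Finset.sdiff_disjoint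
    · exact Finset.subset_union_right
  · intro r hr
    simp only [Finset.mem_coe, Finset.mem_filter] at hr
    exact Finset.sdiff_union_of_subset hr.2
  · intro q hq
    simp only [Finset.mem_coe, Finset.mem_powersetCard] at hq
    exact Finset.union_sdiff_cancel_right (Disjoint.mono_left hq.1 Finset.sdiff_disjoint)

noncomputable def stmt7elem {ℓ m : ℕ} (S : {S : Finset (Fin ℓ) // S.card = m}) (k : Fin m) :
    Fin ℓ := ((S.1.orderIsoOfFin S.2 k : {a // a ∈ S.1}) : Fin ℓ)

lemma stmt7elem_mem {ℓ m : ℕ} (S : {S : Finset (Fin ℓ) // S.card = m}) (k : Fin m) :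
    stmt7elem S k ∈ S.1 := (S.1.orderIsoOfFin S.2 k).2

lemma stmt7elem_symm {ℓ m : ℕ} (S : {S : Finset (Fin ℓ) // S.card = m}) (i : Fin ℓ)
    (h : i ∈ S.1) : stmt7elem S ((S.1.orderIsoOfFin S.2).symm ⟨i, h⟩) = i := by
  simp [stmt7elem]

lemma stmt7symm_eq_iff {ℓ m : ℕ} (S : {S : Finset (Fin ℓ) // S.card = m}) (i : Fin ℓ)
    (h : i ∈ S.1) (k' : Fin m) :
    ((S.1.orderIsoOfFin S.2).symm ⟨i, h⟩ = k') ↔ i = stmt7elem S k' := by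
  rw [OrderIso.symm_apply_eq]
  constructor
  · intro hh; rw [stmt7elem, ← hh]
  · intro hh; exact Subtype.ext hh

-- transfer of sums over the subtype
lemma stmt7transfer {ℓ m : ℕ} (f : Finset (Fin ℓ) → ℝ) :
    ∑ S : {S : Finset (Fin ℓ) // S.card = m}, f S.1
      = ∑ T ∈ Finset.univ.powersetCard m, f T :=
  (Finset.sum_subtype _ (fun T => Finset.mem_powersetCard_univ) f).symm

lemma stmt7C1 {ℓ m : ℕ} (hm : 1 ≤ m) (hmℓ : m ≤ ℓ) (i : Fin ℓ) :
    ∑ S : {S : Finset (Fin ℓ) // S.card = m}, (if i ∈ S.1 then (1:ℝ) else 0)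
      = ((ℓ - 1).choose (m - 1) : ℝ) := by
  rw [stmt7transfer (fun T => if i ∈ T then (1:ℝ) else 0), Finset.sum_boole]
  have h := count_superset (Finset.univ : Finset (Fin ℓ)) {i} (by simp) (m - 1)
  simp only [Finset.card_singleton, Finset.singleton_subset_iff, Finset.card_univ,
    Fintype.card_fin] at h
  rw [Nat.sub_add_cancel hm] at h
  rw [h]

lemma stmt7C2 {ℓ m : ℕ} (hm : 2 ≤ m) (i j : Fin ℓ) (hij : i ≠ j) :
    ∑ S : {S : Finset (Fin ℓ) // S.card = m},
        ((if i ∈ S.1 then (1:ℝ) else 0) * (if j ∈ S.1 then (1:ℝ) else 0))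
      = ((ℓ - 2).choose (m - 2) : ℝ) := by
  rw [stmt7transfer (fun T => (if i ∈ T then (1:ℝ) else 0) * (if j ∈ T then (1:ℝ) else 0))]
  have hcongr : ∀ T : Finset (Fin ℓ),
      (if i ∈ T then (1:ℝ) else 0) * (if j ∈ T then (1:ℝ) else 0)
        = if ({i, j} : Finset (Fin ℓ)) ⊆ T then (1:ℝ) else 0 := by
    intro T
    by_cases h1 : i ∈ T <;> by_cases h2 : j ∈ T <;>
      simp [h1, h2, Finset.insert_subset_iff]
  rw [Finset.sum_congr rfl (fun T _ => hcongr T), Finset.sum_boole]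
  have h := count_superset (Finset.univ : Finset (Fin ℓ)) {i, j} (by simp) (m - 2)
  have hc2 : ({i, j} : Finset (Fin ℓ)).card = 2 := Finset.card_pair hij
  rw [hc2, Nat.sub_add_cancel hm, Finset.card_univ, Fintype.card_fin] at h
  rw [h]

lemma stmt7C2' {ℓ m : ℕ} (hm : 2 ≤ m) (hmℓ : m ≤ ℓ) (i j : Fin ℓ) :
    ∑ S : {S : Finset (Fin ℓ) // S.card = m},
        ((if i ∈ S.1 then (1:ℝ) else 0) * (if j ∈ S.1 then (1:ℝ) else 0))
      = ((ℓ - 2).choose (m - 2) : ℝ)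
        + (((ℓ - 1).choose (m - 1) : ℝ) - ((ℓ - 2).choose (m - 2) : ℝ))
          * (if i = j then 1 else 0) := by
  by_cases hij : i = j
  · subst hij
    have : ∀ S : {S : Finset (Fin ℓ) // S.card = m},
        ((if i ∈ S.1 then (1:ℝ) else 0) * (if i ∈ S.1 then (1:ℝ) else 0))
          = (if i ∈ S.1 then (1:ℝ) else 0) := fun S => by by_cases h : i ∈ S.1 <;> simp [h]
    rw [Finset.sum_congr rfl (fun S _ => this S), stmt7C1 (le_trans one_le_two hm) hmℓ i]
    simp
  · rw [stmt7C2 hm i j hij]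
    simp [hij]

lemma stmt7C3 {ℓ m : ℕ} (hm : 2 ≤ m) (hmℓ : m ≤ ℓ) (i : Fin ℓ)
    (S' : {S : Finset (Fin ℓ) // S.card = m}) :
    ∑ S : {S : Finset (Fin ℓ) // S.card = m},
        ((if i ∈ S.1 then (1:ℝ) else 0) * ((S.1 ∩ S'.1).card : ℝ))
      = (m : ℝ) * ((ℓ - 2).choose (m - 2) : ℝ)
        + (((ℓ - 1).choose (m - 1) : ℝ) - ((ℓ - 2).choose (m - 2) : ℝ))
          * (if i ∈ S'.1 then 1 else 0) := by
  have hcard : ∀ S : {S : Finset (Fin ℓ) // S.card = m},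
      ((S.1 ∩ S'.1).card : ℝ) = ∑ a ∈ S'.1, (if a ∈ S.1 then (1:ℝ) else 0) := by
    intro S
    rw [Finset.sum_ite_mem, Finset.sum_const, Finset.inter_comm]
    simp
  calc ∑ S : {S : Finset (Fin ℓ) // S.card = m},
        ((if i ∈ S.1 then (1:ℝ) else 0) * ((S.1 ∩ S'.1).card : ℝ))
      = ∑ S : {S : Finset (Fin ℓ) // S.card = m}, ∑ a ∈ S'.1,
          ((if i ∈ S.1 then (1:ℝ) else 0) * (if a ∈ S.1 then (1:ℝ) else 0)) := by
        refine Finset.sum_congr rfl fun S _ => ?_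
        rw [hcard S, Finset.mul_sum]
    _ = ∑ a ∈ S'.1, ∑ S : {S : Finset (Fin ℓ) // S.card = m},
          ((if i ∈ S.1 then (1:ℝ) else 0) * (if a ∈ S.1 then (1:ℝ) else 0)) :=
        Finset.sum_comm
    _ = ∑ a ∈ S'.1, (((ℓ - 2).choose (m - 2) : ℝ)
          + (((ℓ - 1).choose (m - 1) : ℝ) - ((ℓ - 2).choose (m - 2) : ℝ))
            * (if i = a then 1 else 0)) :=
        Finset.sum_congr rfl fun a _ => stmt7C2' hm hmℓ i a
    _ = _ := by
        rw [Finset.sum_add_distrib, Finset.sum_const, S'.2, ← Finset.mul_sum,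
          Finset.sum_ite_eq]
        simp [mul_comm]

section inner_lemmas
variable {H : Type*} [NormedAddCommGroup H] [InnerProductSpace ℝ H]
variable {ℓ m : ℕ} {ρ γ : ℝ} {x : Fin ℓ → H}
variable {n u : {S : Finset (Fin ℓ) // S.card = m} → Fin m → H}

lemma stmt7elem_def {ℓ m : ℕ} (S : {S : Finset (Fin ℓ) // S.card = m}) (k : Fin m) :
    ((S.1.orderIsoOfFin S.2 k : {a // a ∈ S.1}) : Fin ℓ) = stmt7elem S k := rfl

lemma stmt7xx (hx1 : ∀ i, ⟪x i, x i⟫ = 1) (hx2 : ∀ i j, i ≠ j → ⟪x i, x j⟫ = ρ)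
    (i j : Fin ℓ) : ⟪x i, x j⟫ = ρ + (1 - ρ) * (if i = j then 1 else 0) := by
  by_cases h : i = j
  · subst h; rw [hx1 i, if_pos rfl]; ring
  · simp [h, hx2 i j h]

lemma stmt7xu (hγ : 0 ≤ γ)
    (hx1 : ∀ i, ⟪x i, x i⟫ = 1) (hx2 : ∀ i j, i ≠ j → ⟪x i, x j⟫ = ρ)
    (hn4 : ∀ S k i, ⟪n S k, x i⟫ = 0)
    (hu : ∀ S k, u S k =
      (m : ℝ) • x ((S.1.orderIsoOfFin S.2 k : {a // a ∈ S.1}) : Fin ℓ)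
        - ∑ j ∈ S.1, x j + Real.sqrt γ • n S k)
    (i : Fin ℓ) (S : {S : Finset (Fin ℓ) // S.card = m}) (k : Fin m) :
    ⟪x i, u S k⟫ = (1 - ρ) * ((m : ℝ) * (if i = stmt7elem S k then 1 else 0)
      - (if i ∈ S.1 then 1 else 0)) := by
  have hnx : ⟪x i, n S k⟫ = 0 := by rw [real_inner_comm]; exact hn4 S k i
  rw [hu S k]
  rw [inner_add_right, inner_sub_right, real_inner_smul_right, real_inner_smul_right,
    inner_sum, hnx]
  have hsum : ∑ j ∈ S.1, ⟪x i, x j⟫ = (m : ℝ) * ρ + (1 - ρ) * (if i ∈ S.1 then 1 else 0) := by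
    rw [Finset.sum_congr rfl (fun j _ => stmt7xx hx1 hx2 i j), Finset.sum_add_distrib,
      Finset.sum_const, S.2, ← Finset.mul_sum, Finset.sum_ite_eq]
    simp [mul_comm]
  rw [hsum, stmt7elem_def, stmt7xx hx1 hx2 i (stmt7elem S k)]
  ring

lemma stmt7un (hγ : 0 ≤ γ)
    (hn4 : ∀ S k i, ⟪n S k, x i⟫ = 0)
    (hu : ∀ S k, u S k =
      (m : ℝ) • x ((S.1.orderIsoOfFin S.2 k : {a // a ∈ S.1}) : Fin ℓ)
        - ∑ j ∈ S.1, x j + Real.sqrt γ • n S k)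
    (S S' : {S : Finset (Fin ℓ) // S.card = m}) (k k' : Fin m) :
    ⟪u S k, n S' k'⟫ = Real.sqrt γ * ⟪n S k, n S' k'⟫ := by
  rw [hu S k]
  rw [inner_add_left, inner_sub_left, sum_inner, real_inner_smul_left, real_inner_smul_left]
  have h0 : ∀ i : Fin ℓ, ⟪x i, n S' k'⟫ = 0 := fun i => by
    rw [real_inner_comm]; exact hn4 S' k' i
  rw [Finset.sum_congr rfl fun i _ => h0 i, h0]
  simp

lemma stmt7nn (hn1 : ∀ S k, ⟪n S k, n S k⟫ = (m : ℝ) - 1)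
    (hn2 : ∀ S k k', k ≠ k' → ⟪n S k, n S k'⟫ = -1)
    (hn3 : ∀ S S' k k', S ≠ S' → ⟪n S k, n S' k'⟫ = 0)
    (S S' : {S : Finset (Fin ℓ) // S.card = m}) (k k' : Fin m) :
    ⟪n S k, n S' k'⟫ = if S = S' then ((m : ℝ) * (if k = k' then 1 else 0) - 1) else 0 := by
  by_cases hS : S = S'
  · subst hS
    by_cases hk : k = k'
    · subst hk; rw [hn1 S k, if_pos rfl, if_pos rfl]; ring
    · simp [hk, hn2 S k k' hk]
  · simp [hS, hn3 S S' k k' hS]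

lemma stmt7uu (hγ : 0 ≤ γ)
    (hx1 : ∀ i, ⟪x i, x i⟫ = 1) (hx2 : ∀ i j, i ≠ j → ⟪x i, x j⟫ = ρ)
    (hn1 : ∀ S k, ⟪n S k, n S k⟫ = (m : ℝ) - 1)
    (hn2 : ∀ S k k', k ≠ k' → ⟪n S k, n S k'⟫ = -1)
    (hn3 : ∀ S S' k k', S ≠ S' → ⟪n S k, n S' k'⟫ = 0)
    (hn4 : ∀ S k i, ⟪n S k, x i⟫ = 0)
    (hu : ∀ S k, u S k =
      (m : ℝ) • x ((S.1.orderIsoOfFin S.2 k : {a // a ∈ S.1}) : Fin ℓ)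
        - ∑ j ∈ S.1, x j + Real.sqrt γ • n S k)
    (S S' : {S : Finset (Fin ℓ) // S.card = m}) (k k' : Fin m) :
    ⟪u S k, u S' k'⟫
      = γ * (if S = S' then ((m : ℝ) * (if k = k' then 1 else 0) - 1) else 0)
        + (1 - ρ) * ((m : ℝ) * (m : ℝ) * (if stmt7elem S k = stmt7elem S' k' then 1 else 0)
          - (m : ℝ) * (if stmt7elem S k ∈ S'.1 then 1 else 0)
          - (m : ℝ) * (if stmt7elem S' k' ∈ S.1 then 1 else 0)
          + ((S.1 ∩ S'.1).card : ℝ)) := by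
  have hux : ∀ j, ⟪u S k, x j⟫ = (1 - ρ) * ((m : ℝ) * (if j = stmt7elem S k then 1 else 0)
      - (if j ∈ S.1 then 1 else 0)) := by
    intro j
    rw [real_inner_comm]
    exact stmt7xu hγ hx1 hx2 hn4 hu j S k
  conv_lhs => rw [hu S' k']
  rw [inner_add_right, inner_sub_right, real_inner_smul_right, real_inner_smul_right,
    inner_sum, stmt7un hγ hn4 hu S S' k k', stmt7nn hn1 hn2 hn3 S S' k k']
  have hsq : Real.sqrt γ * (Real.sqrt γ * (if S = S' then ((m : ℝ) * (if k = k' then 1 else 0) - 1) else 0))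
      = γ * (if S = S' then ((m : ℝ) * (if k = k' then 1 else 0) - 1) else 0) := by
    rw [← mul_assoc, Real.mul_self_sqrt hγ]
  rw [hsq, stmt7elem_def, hux]
  have hsum : ∑ j ∈ S'.1, ⟪u S k, x j⟫
      = (1 - ρ) * ((m : ℝ) * (if stmt7elem S k ∈ S'.1 then 1 else 0)
        - ((S.1 ∩ S'.1).card : ℝ)) := by
    rw [Finset.sum_congr rfl (fun j _ => hux j), ← Finset.mul_sum]
    congr 1
    rw [Finset.sum_sub_distrib, ← Finset.mul_sum, Finset.sum_ite_eq', Finset.sum_ite_mem,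
      Finset.sum_const, Finset.inter_comm]
    simp
  rw [hsum]
  rw [show (if stmt7elem S' k' = stmt7elem S k then (1:ℝ) else 0)
    = (if stmt7elem S k = stmt7elem S' k' then (1:ℝ) else 0) from if_congr eq_comm rfl rfl]
  ring

end inner_lemmas

/-- Proposition 4, second-moment form: with `u_{S,k} = m·x_{i_k} - ∑_{j∈S} x_j
+ √γ·n_{S,k}` and `x̂_i = κ·∑_{S∋i} u_{S,τ_S(i)}`, the errors `x_i - x̂_i` are orthogonal to
all `u_{S',k'}`, and their Gram matrix has diagonal entries `d⁻(γ)` and off-diagonal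
entries `θ⁻(γ)`. -/
theorem stmt_7 {H : Type*} [NormedAddCommGroup H] [InnerProductSpace ℝ H]
    (ℓ m : ℕ) (hℓ : 2 ≤ ℓ) (hm : 2 ≤ m) (hmℓ : m ≤ ℓ)
    (ρ γ : ℝ) (hρ₁ : -(1 / ((ℓ : ℝ) - 1)) < ρ) (hρ₂ : ρ < 1) (hγ : 0 < γ)
    (x : Fin ℓ → H)
    (hx1 : ∀ i, ⟪x i, x i⟫ = 1)
    (hx2 : ∀ i j, i ≠ j → ⟪x i, x j⟫ = ρ)
    (n : {S : Finset (Fin ℓ) // S.card = m} → Fin m → H)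
    (hn1 : ∀ S k, ⟪n S k, n S k⟫ = (m : ℝ) - 1)
    (hn2 : ∀ S k k', k ≠ k' → ⟪n S k, n S k'⟫ = -1)
    (hn3 : ∀ S S' k k', S ≠ S' → ⟪n S k, n S' k'⟫ = 0)
    (hn4 : ∀ S k i, ⟪n S k, x i⟫ = 0)
    (u : {S : Finset (Fin ℓ) // S.card = m} → Fin m → H)
    (hu : ∀ S k, u S k =
      (m : ℝ) • x ((S.1.orderIsoOfFin S.2 k : {a // a ∈ S.1}) : Fin ℓ)
        - ∑ j ∈ S.1, x j + Real.sqrt γ • n S k)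
    (κ : ℝ)
    (hκ : κ = (1 - ρ) / (γ + ((ℓ - 2).choose (m - 2) : ℝ) * (ℓ : ℝ) * (1 - ρ)))
    (xhat : Fin ℓ → H)
    (hxhat : ∀ i, xhat i = κ • ∑ S : {S : Finset (Fin ℓ) // S.card = m},
        if h : i ∈ S.1 then u S ((S.1.orderIsoOfFin S.2).symm ⟨i, h⟩) else 0) :
    (∀ i S' k', ⟪x i - xhat i, u S' k'⟫ = 0) ∧
    (∀ i j, ⟪x i - xhat i, x j - xhat j⟫ =
      if i = j then
        1 - ((ℓ - 2).choose (m - 2) : ℝ) * ((ℓ : ℝ) - 1) * (1 - ρ) ^ 2 /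
          (γ + ((ℓ - 2).choose (m - 2) : ℝ) * (ℓ : ℝ) * (1 - ρ))
      else
        ρ + ((ℓ - 2).choose (m - 2) : ℝ) * (1 - ρ) ^ 2 /
          (γ + ((ℓ - 2).choose (m - 2) : ℝ) * (ℓ : ℝ) * (1 - ρ))) := by
  have hρ : 0 < 1 - ρ := by linarith
  set N1 : ℝ := ((ℓ - 1).choose (m - 1) : ℝ) with hN1def
  set N2 : ℝ := ((ℓ - 2).choose (m - 2) : ℝ) with hN2def
  set D : ℝ := γ + N2 * (ℓ : ℝ) * (1 - ρ) with hDdef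
  have hN2nonneg : 0 ≤ N2 := by positivity
  have hD : 0 < D := by
    have h1 : 0 ≤ N2 * (ℓ : ℝ) * (1 - ρ) := by positivity
    rw [hDdef]; linarith
  -- the key combinatorial identity
  have hNnat : (ℓ - 1) * (ℓ - 2).choose (m - 2) = (ℓ - 1).choose (m - 1) * (m - 1) := by
    have h := Nat.add_one_mul_choose_eq (ℓ - 2) (m - 2)
    have h1 : ℓ - 2 + 1 = ℓ - 1 := by omega
    have h2 : m - 2 + 1 = m - 1 := by omega
    simpa [Nat.succ_eq_add_one, h1, h2] using h
  have hN : ((ℓ : ℝ) - 1) * N2 = N1 * ((m : ℝ) - 1) := by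
    have h := congrArg (Nat.cast : ℕ → ℝ) hNnat
    rw [Nat.cast_mul, Nat.cast_mul, Nat.cast_sub (by omega : 1 ≤ ℓ),
      Nat.cast_sub (by omega : 1 ≤ m)] at h
    simpa using h
  have hxhat_inner : ∀ (i : Fin ℓ) (y : H), ⟪xhat i, y⟫
      = κ * ∑ S : {S : Finset (Fin ℓ) // S.card = m},
          (if h : i ∈ S.1 then ⟪u S ((S.1.orderIsoOfFin S.2).symm ⟨i, h⟩), y⟫ else 0) := by
    intro i y
    rw [hxhat i, real_inner_smul_left, sum_inner]
    congr 1
    refine Finset.sum_congr rfl fun S _ => ?_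
    by_cases h : i ∈ S.1 <;> simp [h]
  -- Part (a)
  have ha : ∀ i S' k', ⟪x i - xhat i, u S' k'⟫ = 0 := by
    intro i S' k'
    rw [inner_sub_left, hxhat_inner i (u S' k'),
      stmt7xu hγ.le hx1 hx2 hn4 hu i S' k']
    have hT : ∑ S : {S : Finset (Fin ℓ) // S.card = m},
        (if h : i ∈ S.1 then ⟪u S ((S.1.orderIsoOfFin S.2).symm ⟨i, h⟩), u S' k'⟫ else 0)
        = D * ((m : ℝ) * (if i = stmt7elem S' k' then 1 else 0)
            - (if i ∈ S'.1 then 1 else 0)) := by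
      have hpoint : ∀ S : {S : Finset (Fin ℓ) // S.card = m},
          (if h : i ∈ S.1 then ⟪u S ((S.1.orderIsoOfFin S.2).symm ⟨i, h⟩), u S' k'⟫ else 0)
          = (if S = S' then γ * ((m : ℝ) * (if i = stmt7elem S' k' then 1 else 0)
                - (if i ∈ S'.1 then 1 else 0)) else 0)
            + (if i ∈ S.1 then (1:ℝ) else 0)
              * ((1 - ρ) * ((m : ℝ) * (m : ℝ) * (if i = stmt7elem S' k' then 1 else 0)
                - (m : ℝ) * (if i ∈ S'.1 then 1 else 0)
                - (m : ℝ) * (if stmt7elem S' k' ∈ S.1 then 1 else 0)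
                + ((S.1 ∩ S'.1).card : ℝ))) := by
        intro S
        by_cases h : i ∈ S.1
        · rw [dif_pos h, stmt7uu hγ.le hx1 hx2 hn1 hn2 hn3 hn4 hu, stmt7elem_symm S i h]
          by_cases hS : S = S'
          · subst hS
            rw [if_pos rfl, if_pos rfl, if_pos h,
              if_congr (stmt7symm_eq_iff S i h k') rfl rfl]
            ring
          · rw [if_neg hS, if_neg hS, if_pos h]
            ring
        · rw [dif_neg h, if_neg h, zero_mul, add_zero]
          by_cases hS : S = S'
          · subst hS
            have hij' : i ≠ stmt7elem S k' := fun hh => h (hh ▸ stmt7elem_mem S k')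
            rw [if_pos rfl, if_neg hij', if_neg h]
            ring
          · rw [if_neg hS]
      rw [Finset.sum_congr rfl fun S _ => hpoint S, Finset.sum_add_distrib]
      have hA : ∑ S : {S : Finset (Fin ℓ) // S.card = m},
          (if S = S' then γ * ((m : ℝ) * (if i = stmt7elem S' k' then 1 else 0)
              - (if i ∈ S'.1 then 1 else 0)) else 0)
          = γ * ((m : ℝ) * (if i = stmt7elem S' k' then 1 else 0)
              - (if i ∈ S'.1 then 1 else 0)) := by
        rw [Finset.sum_ite_eq' Finset.univ S']
        simp
      have hBpoint : ∀ S : {S : Finset (Fin ℓ) // S.card = m},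
          (if i ∈ S.1 then (1:ℝ) else 0)
            * ((1 - ρ) * ((m : ℝ) * (m : ℝ) * (if i = stmt7elem S' k' then 1 else 0)
              - (m : ℝ) * (if i ∈ S'.1 then 1 else 0)
              - (m : ℝ) * (if stmt7elem S' k' ∈ S.1 then 1 else 0)
              + ((S.1 ∩ S'.1).card : ℝ)))
          = ((1 - ρ) * ((m : ℝ) * (m : ℝ) * (if i = stmt7elem S' k' then 1 else 0)
              - (m : ℝ) * (if i ∈ S'.1 then 1 else 0))) * (if i ∈ S.1 then (1:ℝ) else 0)
            + (-((1 - ρ) * (m : ℝ)))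
              * ((if i ∈ S.1 then (1:ℝ) else 0) * (if stmt7elem S' k' ∈ S.1 then 1 else 0))
            + (1 - ρ) * ((if i ∈ S.1 then (1:ℝ) else 0) * ((S.1 ∩ S'.1).card : ℝ)) := by
        intro S; ring
      have hB : ∑ S : {S : Finset (Fin ℓ) // S.card = m},
          ((if i ∈ S.1 then (1:ℝ) else 0)
            * ((1 - ρ) * ((m : ℝ) * (m : ℝ) * (if i = stmt7elem S' k' then 1 else 0)
              - (m : ℝ) * (if i ∈ S'.1 then 1 else 0)
              - (m : ℝ) * (if stmt7elem S' k' ∈ S.1 then 1 else 0)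
              + ((S.1 ∩ S'.1).card : ℝ))))
          = ((1 - ρ) * ((m : ℝ) * (m : ℝ) * (if i = stmt7elem S' k' then 1 else 0)
              - (m : ℝ) * (if i ∈ S'.1 then 1 else 0))) * N1
            + (-((1 - ρ) * (m : ℝ))) * (N2 + (N1 - N2) * (if i = stmt7elem S' k' then 1 else 0))
            + (1 - ρ) * ((m : ℝ) * N2 + (N1 - N2) * (if i ∈ S'.1 then 1 else 0)) := by
        rw [Finset.sum_congr rfl fun S _ => hBpoint S, Finset.sum_add_distrib,
          Finset.sum_add_distrib, ← Finset.mul_sum, ← Finset.mul_sum, ← Finset.mul_sum,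
          stmt7C1 (by omega) hmℓ i, stmt7C2' hm hmℓ i (stmt7elem S' k'),
          stmt7C3 hm hmℓ i S']
      rw [hA, hB]
      linear_combination (((if i ∈ S'.1 then (1:ℝ) else 0)
        - (m : ℝ) * (if i = stmt7elem S' k' then (1:ℝ) else 0)) * (1 - ρ)) * hN
    rw [hT, hκ]
    field_simp
    ring
  refine ⟨ha, ?_⟩
  -- Part (b)
  have hb0 : ∀ i j, ⟪x i - xhat i, xhat j⟫ = 0 := by
    intro i j
    rw [hxhat j, real_inner_smul_right, inner_sum]
    rw [Finset.sum_eq_zero, mul_zero]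
    intro S _
    by_cases h : j ∈ S.1
    · rw [dif_pos h]; exact ha i S _
    · rw [dif_neg h, inner_zero_right]
  intro i j
  rw [inner_sub_right, hb0 i j, sub_zero, inner_sub_left, hxhat_inner i (x j),
    stmt7xx hx1 hx2 i j]
  have hpoint : ∀ S : {S : Finset (Fin ℓ) // S.card = m},
      (if h : i ∈ S.1 then ⟪u S ((S.1.orderIsoOfFin S.2).symm ⟨i, h⟩), x j⟫ else 0)
      = ((1 - ρ) * ((m : ℝ) * (if i = j then 1 else 0))) * (if i ∈ S.1 then (1:ℝ) else 0)
        + (-(1 - ρ)) * ((if i ∈ S.1 then (1:ℝ) else 0) * (if j ∈ S.1 then (1:ℝ) else 0)) := by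
    intro S
    by_cases h : i ∈ S.1
    · rw [dif_pos h, real_inner_comm, stmt7xu hγ.le hx1 hx2 hn4 hu j S _,
        stmt7elem_symm S i h, if_congr (eq_comm : j = i ↔ i = j) rfl rfl, if_pos h]
      ring
    · rw [dif_neg h, if_neg h]; ring
  rw [Finset.sum_congr rfl fun S _ => hpoint S, Finset.sum_add_distrib, ← Finset.mul_sum,
    ← Finset.mul_sum, stmt7C1 (by omega) hmℓ i, stmt7C2' hm hmℓ i j]
  by_cases hij : i = j
  · rw [if_pos hij, if_pos hij, hκ]
    field_simp
    nlinarith [hN, hD, hρ]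
  · rw [if_neg hij, if_neg hij, hκ]
    field_simp
    rw [← hN2def]
    ring
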